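/- Let N ≥ 2 be an integer and let s = s(N) be the smallest positive integer such that every sequence of s units of ℤ/Nℤ contains a nonempty subsequence whose product is 1. Let v and t be integers with v > t > s, and let x₁, …, x_v be units of ℤ/Nℤ. Then there are at least C(v,t)/C(v,s) distinct subsets S ⊆ {1, …, v} with t − s ≤ |S| ≤ t such that ∏_{i ∈ S} x_i = 1, where C(·,·) denotes the binomial coefficient. -/

import Mathlib

open Finset

private lemma choose_le_add (d n k : ℕ) : n.choose k ≤ (n + d).choose (k + d) := by
  induction d with
  | zero => simp
  | succ d ih =>
    calc n.choose k ≤ (n + d).choose (k + d) := ih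
      _ ≤ (n + d + 1).choose (k + d + 1) := by
          rw [Nat.choose_succ_succ]; exact Nat.le_add_right _ _

private lemma extract_lemma (N s v : ℕ)
    (hs : ∀ l : List (ZMod N)ˣ, l.length = s →
      ∃ u : List (ZMod N)ˣ, u.Sublist l ∧ u ≠ [] ∧ u.prod = 1)
    (x : Fin v → (ZMod N)ˣ) :
    ∀ n (T : Finset (Fin v)), T.card = n →
      ∃ S ⊆ T, ∏ i ∈ S, x i = 1 ∧ T.card - S.card < s := by
  intro n
  induction n using Nat.strong_induction_on with
  | _ n ih =>
    intro T hT
    by_cases h : T.card < s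
    · exact ⟨∅, empty_subset _, Finset.prod_empty, by simpa using h⟩
    · push_neg at h
      obtain ⟨T₀, hT₀sub, hT₀card⟩ := Finset.exists_subset_card_eq h
      obtain ⟨u, husub, hune, huprod⟩ := hs (T₀.toList.map x) (by simp [hT₀card])
      obtain ⟨l', hl'sub, hl'eq⟩ := List.sublist_map_iff.mp husub
      have hl'nd : l'.Nodup := hl'sub.nodup T₀.nodup_toList
      set P := l'.toFinset with hP
      have hPsub : P ⊆ T := by
        intro i hi
        apply hT₀sub
        have := List.mem_toFinset.mp hi
        have := hl'sub.mem this
        simpa using this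
      have hPne : P.Nonempty := by
        have : l' ≠ [] := by
          intro hnil; apply hune; rw [hl'eq, hnil]; rfl
        rw [hP, Finset.nonempty_iff_ne_empty]
        exact fun hc => this ((List.toFinset_eq_empty_iff l').mp hc)
      have hPprod : ∏ i ∈ P, x i = 1 := by
        rw [hP, List.prod_toFinset x hl'nd, ← hl'eq, huprod]
      have hcard : (T \ P).card < n := by
        rw [Finset.card_sdiff_of_subset hPsub, ← hT]
        have := Finset.card_pos.mpr hPne
        have := Finset.card_le_card hPsub
        omega
      obtain ⟨S', hS'sub, hS'prod, hS'lt⟩ := ih _ hcard (T \ P) rfl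
      have hdisj : Disjoint S' P := Finset.disjoint_of_subset_left hS'sub
        (Finset.sdiff_disjoint)
      refine ⟨S' ∪ P, ?_, ?_, ?_⟩
      · exact Finset.union_subset (hS'sub.trans (Finset.sdiff_subset)) hPsub
      · rw [Finset.prod_union hdisj, hS'prod, hPprod, one_mul]
      · rw [Finset.card_union_of_disjoint hdisj]
        rw [Finset.card_sdiff_of_subset hPsub] at hS'lt
        have := Finset.card_le_card hPsub
        omega

/-- If `s = s(N)` is the smallest positive integer such that every sequence of
`s` units of `ℤ/Nℤ` contains a nonempty subsequence of product `1`, and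
`v > t > s`, then for any units `x₁, …, x_v` of `ℤ/Nℤ` there are at least
`C(v,t)/C(v,s)` subsets `S ⊆ {1, …, v}` with `t - s ≤ |S| ≤ t` and
`∏_{i ∈ S} x_i = 1`. -/
theorem many_subsets_with_product_one (N : ℕ) (hN : 2 ≤ N) (s : ℕ)
    (hs : IsLeast {m : ℕ | 0 < m ∧ ∀ l : List (ZMod N)ˣ, l.length = m →
      ∃ t : List (ZMod N)ˣ, t.Sublist l ∧ t ≠ [] ∧ t.prod = 1} s)
    (v t : ℕ) (hts : s < t) (hvt : t < v) (x : Fin v → (ZMod N)ˣ) :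
    ((v.choose t : ℝ) / (v.choose s : ℝ)) ≤
      ((Finset.univ.filter (fun S : Finset (Fin v) =>
        t - s ≤ S.card ∧ S.card ≤ t ∧ ∏ i ∈ S, x i = 1)).card : ℝ) := by
  obtain ⟨⟨hspos, hsall⟩, _⟩ := hs
  set G := Finset.univ.filter (fun S : Finset (Fin v) =>
    t - s ≤ S.card ∧ S.card ≤ t ∧ ∏ i ∈ S, x i = 1) with hG
  have claim := extract_lemma N s v hsall x
  -- the choice function
  have hex : ∀ T : Finset (Fin v), ∃ S ⊆ T, ∏ i ∈ S, x i = 1 ∧ T.card - S.card < s :=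
    fun T => claim T.card T rfl
  choose f hfsub hfprod hfcard using hex
  set A := Finset.powersetCard t (Finset.univ : Finset (Fin v)) with hA
  have hmaps : ∀ T ∈ A, f T ∈ G := by
    intro T hT
    rw [hA, Finset.mem_powersetCard] at hT
    obtain ⟨-, hTcard⟩ := hT
    have h1 := hfsub T
    have h2 := hfcard T
    have hle := Finset.card_le_card h1
    rw [hG, Finset.mem_filter]
    exact ⟨Finset.mem_univ _, by omega, by omega, hfprod T⟩
  have hfiber : ∀ S ∈ G, (A.filter (fun T => f T = S)).card ≤ v.choose s := by
    intro S hSG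
    rw [hG, Finset.mem_filter] at hSG
    obtain ⟨-, hc1, hc2, -⟩ := hSG
    have hinj : ∀ T ∈ A.filter (fun T => f T = S), ∀ T' ∈ A.filter (fun T => f T = S),
        T \ S = T' \ S → T = T' := by
      intro T hT T' hT' heq
      rw [Finset.mem_filter] at hT hT'
      have h1 : S ⊆ T := hT.2 ▸ hfsub T
      have h2 : S ⊆ T' := hT'.2 ▸ hfsub T'
      rw [← Finset.sdiff_union_of_subset h1, ← Finset.sdiff_union_of_subset h2, heq]
    have hmaps2 : ∀ T ∈ A.filter (fun T => f T = S),
        T \ S ∈ Finset.powersetCard (t - S.card) Sᶜ := by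
      intro T hT
      rw [Finset.mem_filter] at hT
      obtain ⟨hTA, hTf⟩ := hT
      rw [hA, Finset.mem_powersetCard] at hTA
      have hST : S ⊆ T := hTf ▸ hfsub T
      rw [Finset.mem_powersetCard]
      constructor
      · intro i hi
        rw [Finset.mem_sdiff] at hi
        simpa using hi.2
      · rw [Finset.card_sdiff_of_subset hST, hTA.2]
    have hb := Finset.card_le_card_of_injOn _ hmaps2 hinj
    refine hb.trans ?_
    rw [Finset.card_powersetCard]
    have hSc : Sᶜ.card = v - S.card := by
      rw [Finset.card_compl]
      simp
    rw [hSc]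
    have hd : (v - S.card).choose (t - S.card)
        ≤ (v - S.card + (s - (t - S.card))).choose (t - S.card + (s - (t - S.card))) :=
      choose_le_add _ _ _
    refine hd.trans ?_
    have he1 : t - S.card + (s - (t - S.card)) = s := by omega
    rw [he1]
    apply Nat.choose_le_choose
    omega
  have hcount : A.card ≤ v.choose s * G.card :=
    Finset.card_le_mul_card_image_of_maps_to hmaps _ hfiber
  have hAcard : A.card = v.choose t := by
    rw [hA, Finset.card_powersetCard, Finset.card_univ, Fintype.card_fin]
  rw [hAcard] at hcount
  have hpos : (0 : ℝ) < (v.choose s : ℝ) := by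
    exact_mod_cast Nat.choose_pos (by omega)
  rw [div_le_iff₀ hpos]
  calc ((v.choose t : ℝ)) ≤ ((v.choose s * G.card : ℕ) : ℝ) := by exact_mod_cast hcount
    _ = (G.card : ℝ) * (v.choose s : ℝ) := by push_cast; ring
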